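/- arXiv:2203.05403 — 7 statements merged into one kernel-verified Lean document; each statement's English description precedes it below -/
import Mathlib

section
/- Let F : ℝ^b × ℝ^a → ℝ^b be λ-stable with λ ∈ (0,1) and κ-Lipschitz in its input. Let x and x̃ be two input sequences of length T and let h(t;x), h(t;x̃) be the corresponding hidden-state sequences with zero initial states. Then for every t with 1 ≤ t ≤ T, ‖h(t;x) − h(t;x̃)‖ ≤ ((1 − λ^t)/(1 − λ))·κ·‖x − x̃‖_ℓ∞. -/
/-- For a λ-stable, κ-input-Lipschitz RNN with zero initial states,
for every `1 ≤ t ≤ T`, `‖h(t;x) − h(t;x̃)‖ ≤ ((1 − λ^t)/(1 − λ))·κ·‖x − x̃‖_ℓ∞`. -/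
theorem stmt_1 {a b : ℕ}
    (F : EuclideanSpace ℝ (Fin b) → EuclideanSpace ℝ (Fin a) → EuclideanSpace ℝ (Fin b))
    (lam kappa : ℝ) (hlam0 : 0 < lam) (hlam1 : lam < 1) (hkappa : 0 < kappa)
    (hstable : ∀ (h h' : EuclideanSpace ℝ (Fin b)) (u : EuclideanSpace ℝ (Fin a)),
      ‖F h u - F h' u‖ ≤ lam * ‖h - h'‖)
    (hlip : ∀ (h : EuclideanSpace ℝ (Fin b)) (u u' : EuclideanSpace ℝ (Fin a)),
      ‖F h u - F h u'‖ ≤ kappa * ‖u - u'‖)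
    (T : ℕ) (hT : 1 ≤ T)
    (x xt : ℕ → EuclideanSpace ℝ (Fin a))
    (h ht : ℕ → EuclideanSpace ℝ (Fin b))
    (h0 : h 0 = 0) (ht0 : ht 0 = 0)
    (hrec : ∀ t, h (t + 1) = F (h t) (x (t + 1)))
    (htrec : ∀ t, ht (t + 1) = F (ht t) (xt (t + 1))) :
    ∀ t : ℕ, 1 ≤ t → t ≤ T →
      ‖h t - ht t‖ ≤ ((1 - lam ^ t) / (1 - lam)) * kappa *
        (Finset.Icc 1 T).sup' (Finset.nonempty_Icc.mpr hT)
          (fun s => ‖x s - xt s‖) := by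
  set M := (Finset.Icc 1 T).sup' (Finset.nonempty_Icc.mpr hT)
      (fun s => ‖x s - xt s‖) with hM
  have hlam1' : 0 < 1 - lam := by linarith
  have hMle : ∀ s, 1 ≤ s → s ≤ T → ‖x s - xt s‖ ≤ M := fun s h1 h2 =>
    Finset.le_sup' (fun s => ‖x s - xt s‖) (Finset.mem_Icc.mpr ⟨h1, h2⟩)
  have hM0 : 0 ≤ M := le_trans (norm_nonneg _) (hMle 1 le_rfl hT)
  -- triangle step
  have step : ∀ t, ‖h (t+1) - ht (t+1)‖ ≤ lam * ‖h t - ht t‖ + kappa * ‖x (t+1) - xt (t+1)‖ := by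
    intro t
    rw [hrec, htrec]
    calc ‖F (h t) (x (t+1)) - F (ht t) (xt (t+1))‖
        ≤ ‖F (h t) (x (t+1)) - F (ht t) (x (t+1))‖ + ‖F (ht t) (x (t+1)) - F (ht t) (xt (t+1))‖ :=
          norm_sub_le_norm_sub_add_norm_sub _ _ _
      _ ≤ lam * ‖h t - ht t‖ + kappa * ‖x (t+1) - xt (t+1)‖ :=
          add_le_add (hstable _ _ _) (hlip _ _ _)
  intro t
  induction t with
  | zero => intro h1 _; omega
  | succ n ih =>
    intro _ hnT
    have key : lam ^ (n+1) ≤ 1 := pow_le_one₀ hlam0.le hlam1.le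
    rcases Nat.eq_zero_or_pos n with rfl | hn
    · have := step 0
      rw [h0, ht0, sub_zero, norm_zero, mul_zero, zero_add] at this
      calc ‖h 1 - ht 1‖ ≤ kappa * ‖x 1 - xt 1‖ := by linarith
        _ ≤ kappa * M := by
            exact mul_le_mul_of_nonneg_left (hMle 1 le_rfl hnT) hkappa.le
        _ = ((1 - lam ^ 1) / (1 - lam)) * kappa * M := by
            rw [pow_one]; rw [div_self (ne_of_gt hlam1')]; ring
    · have ihn := ih hn (le_trans (Nat.le_succ n) hnT)
      have hx : ‖x (n+1) - xt (n+1)‖ ≤ M := hMle (n+1) (Nat.succ_le_succ (Nat.zero_le n)) hnT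
      calc ‖h (n+1) - ht (n+1)‖
          ≤ lam * ‖h n - ht n‖ + kappa * ‖x (n+1) - xt (n+1)‖ := step n
        _ ≤ lam * (((1 - lam ^ n) / (1 - lam)) * kappa * M) + kappa * M := by
            apply add_le_add
            · exact mul_le_mul_of_nonneg_left ihn hlam0.le
            · exact mul_le_mul_of_nonneg_left hx hkappa.le
        _ = ((1 - lam ^ (n+1)) / (1 - lam)) * kappa * M := by
            field_simp; ring
end

section
/- Let F : ℝ^b × ℝ^a → ℝ^b be λ-stable with λ ∈ (0,1) and κ-Lipschitz in its input, let W_c be an m × b real matrix and b_c ∈ ℝ^m, and for an input sequence x of length T define q(T;x) = W_c·h(T;x) + b_c, where h(t;x) are the hidden states with zero initial state. Then for any two input sequences x and x̃ of length T, ‖q(T;x) − q(T;x̃)‖ ≤ ‖W_c‖·(κ/(1 − λ))·‖x − x̃‖_ℓ∞, where ‖W_c‖ is the operator norm induced by the Euclidean norms. -/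
/-- With the affine classification layer `q(T;x) = W_c·h(T;x) + b_c` on top of a
λ-stable, κ-input-Lipschitz RNN with zero initial states,
`‖q(T;x) − q(T;x̃)‖ ≤ ‖W_c‖·(κ/(1 − λ))·‖x − x̃‖_ℓ∞`. -/
theorem stmt_3 {a b m : ℕ}
    (F : EuclideanSpace ℝ (Fin b) → EuclideanSpace ℝ (Fin a) → EuclideanSpace ℝ (Fin b))
    (lam kappa : ℝ) (hlam0 : 0 < lam) (hlam1 : lam < 1) (hkappa : 0 < kappa)
    (hstable : ∀ (h h' : EuclideanSpace ℝ (Fin b)) (u : EuclideanSpace ℝ (Fin a)),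
      ‖F h u - F h' u‖ ≤ lam * ‖h - h'‖)
    (hlip : ∀ (h : EuclideanSpace ℝ (Fin b)) (u u' : EuclideanSpace ℝ (Fin a)),
      ‖F h u - F h u'‖ ≤ kappa * ‖u - u'‖)
    (Wc : EuclideanSpace ℝ (Fin b) →L[ℝ] EuclideanSpace ℝ (Fin m))
    (bc : EuclideanSpace ℝ (Fin m))
    (T : ℕ) (hT : 1 ≤ T)
    (x xt : ℕ → EuclideanSpace ℝ (Fin a))
    (h ht : ℕ → EuclideanSpace ℝ (Fin b))
    (h0 : h 0 = 0) (ht0 : ht 0 = 0)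
    (hrec : ∀ t, h (t + 1) = F (h t) (x (t + 1)))
    (htrec : ∀ t, ht (t + 1) = F (ht t) (xt (t + 1))) :
    ‖(Wc (h T) + bc) - (Wc (ht T) + bc)‖ ≤ ‖Wc‖ * (kappa / (1 - lam)) *
      (Finset.Icc 1 T).sup' (Finset.nonempty_Icc.mpr hT)
        (fun s => ‖x s - xt s‖) := by
  set M := (Finset.Icc 1 T).sup' (Finset.nonempty_Icc.mpr hT)
        (fun s => ‖x s - xt s‖) with hM
  have hMle : ∀ s, 1 ≤ s → s ≤ T → ‖x s - xt s‖ ≤ M := by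
    intro s h1 h2
    exact Finset.le_sup' (fun s => ‖x s - xt s‖) (Finset.mem_Icc.mpr ⟨h1, h2⟩)
  have hM0 : 0 ≤ M := le_trans (norm_nonneg _) (hMle 1 le_rfl hT)
  have h1lam : 0 < 1 - lam := by linarith
  have key : ∀ t, t ≤ T → ‖h t - ht t‖ ≤ kappa / (1 - lam) * M := by
    intro t
    induction t with
    | zero =>
      intro _
      simp [h0, ht0]
      positivity
    | succ n ih =>
      intro hn
      have hnT : n ≤ T := Nat.le_of_succ_le hn
      have hb := ih hnT
      rw [hrec, htrec]
      calc ‖F (h n) (x (n+1)) - F (ht n) (xt (n+1))‖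
          ≤ ‖F (h n) (x (n+1)) - F (ht n) (x (n+1))‖
            + ‖F (ht n) (x (n+1)) - F (ht n) (xt (n+1))‖ := by
              have := norm_sub_le_norm_sub_add_norm_sub (F (h n) (x (n+1)))
                (F (ht n) (x (n+1))) (F (ht n) (xt (n+1)))
              exact this
        _ ≤ lam * ‖h n - ht n‖ + kappa * ‖x (n+1) - xt (n+1)‖ :=
              add_le_add (hstable _ _ _) (hlip _ _ _)
        _ ≤ lam * (kappa / (1 - lam) * M) + kappa * M := by
              gcongr
              exact hMle (n+1) (Nat.succ_le_succ (Nat.zero_le n)) hn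
        _ = kappa / (1 - lam) * M := by field_simp; ring
  calc ‖(Wc (h T) + bc) - (Wc (ht T) + bc)‖ = ‖Wc (h T - ht T)‖ := by
        rw [map_sub]; congr 1; abel
    _ ≤ ‖Wc‖ * ‖h T - ht T‖ := Wc.le_opNorm _
    _ ≤ ‖Wc‖ * (kappa / (1 - lam) * M) := by
        gcongr
        exact key T le_rfl
    _ = ‖Wc‖ * (kappa / (1 - lam)) * M := by ring
end

section
/- Let F : ℝ^b × ℝ^a → ℝ^b be λ-stable with λ ∈ (0,1) and κ-Lipschitz in its input, let W_c be an m × b real matrix, b_c ∈ ℝ^m, and let σ : ℝ^m → ℝ^m be an L-Lipschitz map (with respect to Euclidean norms). For an input sequence x of length T define p(T;x) = σ(W_c·h(T;x) + b_c), where h(t;x) are the hidden states with zero initial state. Then for any two input sequences x and x̃ of length T, ‖p(T;x) − p(T;x̃)‖ ≤ (L·κ·‖W_c‖/(1 − λ))·‖x − x̃‖_ℓ∞. -/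
/-- With an `L`-Lipschitz output map `σ` composed with the affine layer
`h ↦ W_c·h + b_c` on top of a λ-stable, κ-input-Lipschitz RNN with zero initial states,
`‖p(T;x) − p(T;x̃)‖ ≤ (L·κ·‖W_c‖/(1 − λ))·‖x − x̃‖_ℓ∞`. -/
theorem stmt_4 {a b m : ℕ}
    (F : EuclideanSpace ℝ (Fin b) → EuclideanSpace ℝ (Fin a) → EuclideanSpace ℝ (Fin b))
    (lam kappa : ℝ) (hlam0 : 0 < lam) (hlam1 : lam < 1) (hkappa : 0 < kappa)
    (hstable : ∀ (h h' : EuclideanSpace ℝ (Fin b)) (u : EuclideanSpace ℝ (Fin a)),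
      ‖F h u - F h' u‖ ≤ lam * ‖h - h'‖)
    (hlip : ∀ (h : EuclideanSpace ℝ (Fin b)) (u u' : EuclideanSpace ℝ (Fin a)),
      ‖F h u - F h u'‖ ≤ kappa * ‖u - u'‖)
    (Wc : EuclideanSpace ℝ (Fin b) →L[ℝ] EuclideanSpace ℝ (Fin m))
    (bc : EuclideanSpace ℝ (Fin m))
    (σ : EuclideanSpace ℝ (Fin m) → EuclideanSpace ℝ (Fin m))
    (L : ℝ) (hL : 0 ≤ L)
    (hσ : ∀ q q' : EuclideanSpace ℝ (Fin m), ‖σ q - σ q'‖ ≤ L * ‖q - q'‖)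
    (T : ℕ) (hT : 1 ≤ T)
    (x xt : ℕ → EuclideanSpace ℝ (Fin a))
    (h ht : ℕ → EuclideanSpace ℝ (Fin b))
    (h0 : h 0 = 0) (ht0 : ht 0 = 0)
    (hrec : ∀ t, h (t + 1) = F (h t) (x (t + 1)))
    (htrec : ∀ t, ht (t + 1) = F (ht t) (xt (t + 1))) :
    ‖σ (Wc (h T) + bc) - σ (Wc (ht T) + bc)‖ ≤ (L * kappa * ‖Wc‖ / (1 - lam)) *
      (Finset.Icc 1 T).sup' (Finset.nonempty_Icc.mpr hT)
        (fun s => ‖x s - xt s‖) := by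
  set M := (Finset.Icc 1 T).sup' (Finset.nonempty_Icc.mpr hT)
      (fun s => ‖x s - xt s‖) with hM
  have hMnn : 0 ≤ M := by
    refine le_trans (norm_nonneg (x 1 - xt 1)) ?_
    exact Finset.le_sup' (f := fun s => ‖x s - xt s‖) (Finset.mem_Icc.mpr ⟨le_refl 1, hT⟩)
  have h1lam : 0 < 1 - lam := by linarith
  -- main induction
  have key : ∀ t, t ≤ T → ‖h t - ht t‖ ≤ kappa * M / (1 - lam) := by
    intro t
    induction t with
    | zero =>
      intro _
      rw [h0, ht0, sub_zero, norm_zero]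
      positivity
    | succ t ih =>
      intro hle
      have hdt : ‖h t - ht t‖ ≤ kappa * M / (1 - lam) := ih (le_of_lt hle)
      have hx : ‖x (t+1) - xt (t+1)‖ ≤ M :=
        Finset.le_sup' (f := fun s => ‖x s - xt s‖)
          (Finset.mem_Icc.mpr ⟨Nat.succ_le_succ (Nat.zero_le t), hle⟩)
      rw [hrec, htrec]
      calc ‖F (h t) (x (t+1)) - F (ht t) (xt (t+1))‖
          ≤ ‖F (h t) (x (t+1)) - F (ht t) (x (t+1))‖
            + ‖F (ht t) (x (t+1)) - F (ht t) (xt (t+1))‖ := by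
            have := norm_sub_le_norm_sub_add_norm_sub
              (F (h t) (x (t+1))) (F (ht t) (x (t+1))) (F (ht t) (xt (t+1)))
            exact this
        _ ≤ lam * ‖h t - ht t‖ + kappa * ‖x (t+1) - xt (t+1)‖ :=
            add_le_add (hstable _ _ _) (hlip _ _ _)
        _ ≤ lam * (kappa * M / (1 - lam)) + kappa * M := by
            refine add_le_add ?_ ?_
            · exact mul_le_mul_of_nonneg_left hdt (le_of_lt hlam0)
            · exact mul_le_mul_of_nonneg_left hx (le_of_lt hkappa)
        _ = kappa * M / (1 - lam) := by field_simp; ring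
  have hdT := key T le_rfl
  have step1 : ‖σ (Wc (h T) + bc) - σ (Wc (ht T) + bc)‖
      ≤ L * ‖Wc (h T - ht T)‖ := by
    have := hσ (Wc (h T) + bc) (Wc (ht T) + bc)
    have heq : Wc (h T) + bc - (Wc (ht T) + bc) = Wc (h T - ht T) := by
      rw [map_sub]; abel
    rwa [heq] at this
  have step2 : ‖Wc (h T - ht T)‖ ≤ ‖Wc‖ * ‖h T - ht T‖ := Wc.le_opNorm _
  calc ‖σ (Wc (h T) + bc) - σ (Wc (ht T) + bc)‖
      ≤ L * ‖Wc (h T - ht T)‖ := step1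
    _ ≤ L * (‖Wc‖ * ‖h T - ht T‖) := mul_le_mul_of_nonneg_left step2 hL
    _ ≤ L * (‖Wc‖ * (kappa * M / (1 - lam))) := by
        refine mul_le_mul_of_nonneg_left ?_ hL
        exact mul_le_mul_of_nonneg_left hdT (norm_nonneg _)
    _ = (L * kappa * ‖Wc‖ / (1 - lam)) * M := by ring
end

section
/- The softmax map on ℝ^m, defined by softmax(q)_i = exp(q_i)/Σ_{j=1}^m exp(q_j), is 1-Lipschitz with respect to the Euclidean norm: for all q, q' ∈ ℝ^m, ‖softmax(q) − softmax(q')‖ ≤ ‖q − q'‖. -/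
open Real Finset ContinuousLinearMap

noncomputable def softmax {m : ℕ} (q : EuclideanSpace ℝ (Fin m)) : EuclideanSpace ℝ (Fin m) :=
  (WithLp.equiv 2 (Fin m → ℝ)).symm
    (fun i => Real.exp (q i) / ∑ j : Fin m, Real.exp (q j))

section aux

variable {m : ℕ}

/-- The candidate derivative on the plain pi type. -/
noncomputable def Lpi (p : Fin m → ℝ) : (Fin m → ℝ) →L[ℝ] (Fin m → ℝ) :=
  ContinuousLinearMap.pi (fun i =>
    p i • (ContinuousLinearMap.proj i - ∑ j : Fin m, p j • ContinuousLinearMap.proj j))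

lemma Lpi_apply (p : Fin m → ℝ) (v : Fin m → ℝ) (i : Fin m) :
    Lpi p v i = p i * (v i - ∑ j : Fin m, p j * v j) := by
  simp [Lpi, ContinuousLinearMap.sum_apply]

noncomputable def g (x : Fin m → ℝ) : Fin m → ℝ :=
  fun i => Real.exp (x i) / ∑ j : Fin m, Real.exp (x j)

lemma hasFDerivAt_g [Nonempty (Fin m)] (x : Fin m → ℝ) :
    HasFDerivAt g (Lpi (g x)) x := by
  set S : ℝ := ∑ j : Fin m, Real.exp (x j) with hSdef
  have hS : 0 < S := Finset.sum_pos (fun j _ => Real.exp_pos _) Finset.univ_nonempty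
  apply hasFDerivAt_pi''
  intro i
  have hN : HasFDerivAt (fun y : Fin m → ℝ => Real.exp (y i))
      (Real.exp (x i) • (ContinuousLinearMap.proj i : (Fin m → ℝ) →L[ℝ] ℝ)) x :=
    (Real.hasDerivAt_exp (x i)).comp_hasFDerivAt (f := fun y : Fin m → ℝ => y i) x
      (ContinuousLinearMap.proj i : (Fin m → ℝ) →L[ℝ] ℝ).hasFDerivAt
  have hSd : HasFDerivAt (fun y : Fin m → ℝ => ∑ j : Fin m, Real.exp (y j))
      (∑ j : Fin m, Real.exp (x j) • (ContinuousLinearMap.proj j : (Fin m → ℝ) →L[ℝ] ℝ)) x := by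
    apply HasFDerivAt.fun_sum
    intro j _
    exact (Real.hasDerivAt_exp (x j)).comp_hasFDerivAt (f := fun y : Fin m → ℝ => y j) x
      (ContinuousLinearMap.proj j : (Fin m → ℝ) →L[ℝ] ℝ).hasFDerivAt
  have hI : HasFDerivAt (fun y : Fin m → ℝ => (∑ j : Fin m, Real.exp (y j))⁻¹)
      ((-(S ^ 2)⁻¹) • (∑ j : Fin m, Real.exp (x j) • (ContinuousLinearMap.proj j : (Fin m → ℝ) →L[ℝ] ℝ))) x :=
    (hasDerivAt_inv hS.ne').comp_hasFDerivAt x hSd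
  have hmul := hN.mul hI
  have heq : (fun y : Fin m → ℝ => g y i) =
      fun y : Fin m → ℝ => Real.exp (y i) * (∑ j : Fin m, Real.exp (y j))⁻¹ := by
    funext y; simp [g, div_eq_mul_inv]
  rw [heq]
  convert hmul using 1
  · rfl
  · rfl
  ext v
  simp only [ContinuousLinearMap.coe_comp', Function.comp_apply, ContinuousLinearMap.add_apply,
    ContinuousLinearMap.smul_apply, ContinuousLinearMap.sum_apply,
    ContinuousLinearMap.proj_apply, Lpi_apply, smul_eq_mul]
  have hg' : ∀ j, g x j = Real.exp (x j) / S := fun j => rfl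
  rw [hg' i]
  have : ∑ j : Fin m, g x j * v j = (∑ j : Fin m, Real.exp (x j) * v j) / S := by
    rw [Finset.sum_div]; exact Finset.sum_congr rfl fun j _ => by rw [hg' j]; ring
  rw [this]
  field_simp
  ring

end aux

/-- softmax is 1-Lipschitz with respect to the Euclidean norm. -/
theorem stmt_5 {m : ℕ} (q q' : EuclideanSpace ℝ (Fin m)) :
    ‖softmax q - softmax q'‖ ≤ ‖q - q'‖ := by
  rcases Nat.eq_zero_or_pos m with hm | hm
  · subst hm
    have : softmax q - softmax q' = 0 := Subsingleton.elim _ _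
    rw [this, norm_zero]
    positivity
  have : Nonempty (Fin m) := ⟨⟨0, hm⟩⟩
  set e := PiLp.continuousLinearEquiv 2 ℝ (fun _ : Fin m => ℝ) with he
  -- derivative of softmax on Euclidean space
  set f' : EuclideanSpace ℝ (Fin m) → (EuclideanSpace ℝ (Fin m) →L[ℝ] EuclideanSpace ℝ (Fin m)) :=
    fun x => (e.symm.toContinuousLinearMap.comp (Lpi (g (e x)))).comp e.toContinuousLinearMap
    with hf'
  have hderiv : ∀ x : EuclideanSpace ℝ (Fin m), HasFDerivAt softmax (f' x) x := by
    intro x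
    have h1 : HasFDerivAt (⇑e) e.toContinuousLinearMap x := e.hasFDerivAt
    have h2 := (hasFDerivAt_g (e x)).comp x h1
    have h3 := (e.symm.hasFDerivAt (x := g (e x))).comp x h2
    exact h3
  have hbound : ∀ x : EuclideanSpace ℝ (Fin m), ‖f' x‖ ≤ 1 := by
    intro x
    apply ContinuousLinearMap.opNorm_le_bound _ zero_le_one
    intro v
    rw [one_mul]
    set p : Fin m → ℝ := g (e x) with hp
    have hp0 : ∀ i, 0 ≤ p i := by
      intro i
      have hS : 0 < ∑ j : Fin m, Real.exp ((e x) j) :=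
        Finset.sum_pos (fun j _ => Real.exp_pos _) Finset.univ_nonempty
      exact div_nonneg (Real.exp_pos _).le hS.le
    have hps : ∑ i : Fin m, p i = 1 := by
      have hS : 0 < ∑ j : Fin m, Real.exp ((e x) j) :=
        Finset.sum_pos (fun j _ => Real.exp_pos _) Finset.univ_nonempty
      rw [hp]
      simp only [g]
      rw [← Finset.sum_div, div_self hS.ne']
    have hp1 : ∀ i, p i ≤ 1 := by
      intro i
      rw [← hps]
      exact Finset.single_le_sum (fun j _ => hp0 j) (Finset.mem_univ i)
    have happ : ∀ i, (f' x v) i = p i * (v i - ∑ j : Fin m, p j * v j) := by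
      intro i
      exact Lpi_apply p v i
    set c : ℝ := ∑ j : Fin m, p j * v j with hc
    rw [EuclideanSpace.norm_eq, EuclideanSpace.norm_eq]
    apply Real.sqrt_le_sqrt
    calc ∑ i : Fin m, ‖(f' x v) i‖ ^ 2
        = ∑ i : Fin m, (p i) ^ 2 * (v i - c) ^ 2 := by
          apply Finset.sum_congr rfl; intro i _
          rw [happ i, Real.norm_eq_abs, sq_abs]; ring
      _ ≤ ∑ i : Fin m, p i * (v i - c) ^ 2 := by
          apply Finset.sum_le_sum; intro i _
          have : (p i) ^ 2 ≤ p i := by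
            nlinarith [hp0 i, hp1 i]
          nlinarith [sq_nonneg (v i - c)]
      _ = ∑ i : Fin m, p i * (v i) ^ 2 - c ^ 2 := by
          have expand : ∀ i : Fin m, p i * (v i - c) ^ 2
              = p i * (v i) ^ 2 - 2 * c * (p i * v i) + c ^ 2 * p i := by
            intro i; ring
          simp_rw [expand]
          rw [Finset.sum_add_distrib, Finset.sum_sub_distrib, ← Finset.mul_sum,
            ← Finset.mul_sum, hps, ← hc]
          ring
      _ ≤ ∑ i : Fin m, p i * (v i) ^ 2 := by nlinarith [sq_nonneg c]
      _ ≤ ∑ i : Fin m, ‖v i‖ ^ 2 := by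
          apply Finset.sum_le_sum; intro i _
          rw [Real.norm_eq_abs, sq_abs]
          nlinarith [hp0 i, hp1 i, sq_nonneg (v i)]
  have := Convex.norm_image_sub_le_of_norm_hasFDerivWithin_le
    (f := softmax) (f' := f') (C := 1) (s := Set.univ)
    (fun x _ => (hderiv x).hasFDerivWithinAt)
    (fun x _ => hbound x) convex_univ (Set.mem_univ q') (Set.mem_univ q)
  simpa using this
end

section
/- Let F : ℝ^b × ℝ^a → ℝ^b be λ-stable with λ ∈ (0,1) and κ-Lipschitz in its input, let W_c be an m × b real matrix and b_c ∈ ℝ^m, and for an input sequence x of length T define the belief vector p(T;x) = softmax(W_c·h(T;x) + b_c), where h(t;x) are the hidden states with zero initial state. Then for any two input sequences x and x̃ of length T, ‖p(T;x) − p(T;x̃)‖ ≤ η·‖x − x̃‖_ℓ∞ with η = κ·‖W_c‖/(1 − λ). -/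
namespace SmAux

variable {m : ℕ}

noncomputable def sm (q : EuclideanSpace ℝ (Fin m)) (i : Fin m) : ℝ :=
  Real.exp (q i) / ∑ j, Real.exp (q j)

noncomputable def Dsm (q : EuclideanSpace ℝ (Fin m)) :
    EuclideanSpace ℝ (Fin m) →L[ℝ] EuclideanSpace ℝ (Fin m) :=
  ((PiLp.continuousLinearEquiv 2 ℝ (fun _ : Fin m => ℝ)).symm :
      (Fin m → ℝ) →L[ℝ] EuclideanSpace ℝ (Fin m)).comp
    (ContinuousLinearMap.pi fun i =>
      sm q i • (EuclideanSpace.proj i - ∑ j, sm q j • EuclideanSpace.proj (𝕜 := ℝ) j))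

lemma Dsm_apply (q v : EuclideanSpace ℝ (Fin m)) (i : Fin m) :
    Dsm q v i = sm q i * (v i - ∑ j, sm q j * v j) := by
  simp [Dsm, ContinuousLinearMap.sum_apply]

lemma hasFDerivAt_softmax (q : EuclideanSpace ℝ (Fin m)) :
    HasFDerivAt softmax (Dsm q) q := by
  have hpi : HasFDerivAt (fun q : EuclideanSpace ℝ (Fin m) => (fun i => sm q i : Fin m → ℝ))
      (ContinuousLinearMap.pi fun i =>
        sm q i • (EuclideanSpace.proj i - ∑ j, sm q j • EuclideanSpace.proj (𝕜 := ℝ) j)) q := by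
    apply hasFDerivAt_pi.2
    intro i
    have hS : (0:ℝ) < ∑ j, Real.exp (q j) :=
      Finset.sum_pos (fun j _ => Real.exp_pos _) ⟨i, Finset.mem_univ i⟩
    have hc : HasFDerivAt (fun q : EuclideanSpace ℝ (Fin m) => Real.exp (q i))
        (Real.exp (q i) • EuclideanSpace.proj (𝕜 := ℝ) i) q :=
      (EuclideanSpace.proj (𝕜 := ℝ) i).hasFDerivAt.exp
    have hd : HasFDerivAt (fun q : EuclideanSpace ℝ (Fin m) => ∑ j, Real.exp (q j))
        (∑ j, Real.exp (q j) • EuclideanSpace.proj (𝕜 := ℝ) j) q := by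
      apply HasFDerivAt.fun_sum
      intro j _
      exact (EuclideanSpace.proj (𝕜 := ℝ) j).hasFDerivAt.exp
    have hinv : HasFDerivAt (fun q : EuclideanSpace ℝ (Fin m) => (∑ j, Real.exp (q j))⁻¹)
        ((-((∑ j, Real.exp (q j)) ^ 2)⁻¹) • (∑ j, Real.exp (q j) • EuclideanSpace.proj (𝕜 := ℝ) j)) q :=
      (hasDerivAt_inv hS.ne').comp_hasFDerivAt q hd
    have hmul := hc.fun_mul hinv
    have heq : (fun q : EuclideanSpace ℝ (Fin m) => sm q i) =
        fun q : EuclideanSpace ℝ (Fin m) => Real.exp (q i) * (∑ j, Real.exp (q j))⁻¹ := by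
      funext q; simp [sm, div_eq_mul_inv]
    rw [heq]
    convert hmul using 1
    rfl
    ext v
    simp only [ContinuousLinearMap.smul_apply, ContinuousLinearMap.sub_apply,
      ContinuousLinearMap.sum_apply, ContinuousLinearMap.add_apply,
      ContinuousLinearMap.coe_smul', Pi.smul_apply, smul_eq_mul, sm]
    have hv : ∀ j, (EuclideanSpace.proj (𝕜 := ℝ) j) v = v j := fun j => rfl
    simp only [hv, div_mul_eq_mul_div, ← Finset.sum_div]
    field_simp
    ring
  have : softmax = (((PiLp.continuousLinearEquiv 2 ℝ (fun _ : Fin m => ℝ)).symm :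
      (Fin m → ℝ) →L[ℝ] EuclideanSpace ℝ (Fin m)) : (Fin m → ℝ) → EuclideanSpace ℝ (Fin m)) ∘
      (fun q : EuclideanSpace ℝ (Fin m) => (fun i => sm q i : Fin m → ℝ)) := rfl
  rw [this, Dsm]
  exact (ContinuousLinearMap.hasFDerivAt _).comp q hpi

end SmAux

namespace SmAux2
open SmAux

variable {m : ℕ}

lemma sm_nonneg (q : EuclideanSpace ℝ (Fin m)) (i : Fin m) : 0 ≤ sm q i :=
  div_nonneg (Real.exp_nonneg _) (Finset.sum_nonneg fun j _ => (Real.exp_pos _).le)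

lemma sm_le_one (q : EuclideanSpace ℝ (Fin m)) (i : Fin m) : sm q i ≤ 1 := by
  have hS : (0:ℝ) < ∑ j, Real.exp (q j) :=
    Finset.sum_pos (fun j _ => Real.exp_pos _) ⟨i, Finset.mem_univ i⟩
  rw [sm, div_le_one hS]
  exact Finset.single_le_sum (fun j _ => (Real.exp_pos _).le) (Finset.mem_univ i)

lemma sum_sm_le_one (q : EuclideanSpace ℝ (Fin m)) : ∑ i, sm q i ≤ 1 := by
  unfold sm
  rw [← Finset.sum_div]
  rcases eq_or_lt_of_le (Finset.sum_nonneg fun j (_ : j ∈ Finset.univ) => (Real.exp_pos (q j)).le)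
    with h | h
  · rw [← h]; simp
  · rw [div_self h.ne']

lemma sum_sq_le (p v : Fin m → ℝ) (hp0 : ∀ i, 0 ≤ p i) (hp1 : ∀ i, p i ≤ 1)
    (hps : ∑ i, p i ≤ 1) :
    ∑ i, (p i * (v i - ∑ j, p j * v j)) ^ 2 ≤ ∑ i, v i ^ 2 := by
  set c := ∑ j, p j * v j with hc
  have step1 : ∀ i ∈ Finset.univ, (p i * (v i - c)) ^ 2 ≤ p i * (v i - c) ^ 2 := by
    intro i _
    rw [mul_pow]
    have h2 : p i ^ 2 ≤ p i := by nlinarith [hp0 i, hp1 i]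
    exact mul_le_mul_of_nonneg_right h2 (sq_nonneg _)
  have step3 : ∑ i, p i * v i ^ 2 ≤ ∑ i, v i ^ 2 := by
    apply Finset.sum_le_sum
    intro i _
    nlinarith [hp0 i, hp1 i, sq_nonneg (v i)]
  calc ∑ i, (p i * (v i - c)) ^ 2 ≤ ∑ i, p i * (v i - c) ^ 2 := Finset.sum_le_sum step1
    _ = ∑ i, ((p i * v i ^ 2 - 2 * c * (p i * v i)) + c ^ 2 * p i) :=
        Finset.sum_congr rfl fun i _ => by ring
    _ = (∑ i, p i * v i ^ 2 - ∑ i, 2 * c * (p i * v i)) + ∑ i, c ^ 2 * p i := by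
        rw [Finset.sum_add_distrib, Finset.sum_sub_distrib]
    _ = ∑ i, p i * v i ^ 2 - 2 * c * c + c ^ 2 * ∑ i, p i := by
        rw [← Finset.mul_sum, ← Finset.mul_sum, ← hc]
    _ ≤ ∑ i, v i ^ 2 := by
        have hpsum : (0:ℝ) ≤ ∑ i, p i := Finset.sum_nonneg fun i _ => hp0 i
        nlinarith [sq_nonneg c, mul_le_mul_of_nonneg_left hps (sq_nonneg c)]

lemma norm_Dsm_apply_le (q v : EuclideanSpace ℝ (Fin m)) : ‖Dsm q v‖ ≤ ‖v‖ := by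
  rw [EuclideanSpace.norm_eq, EuclideanSpace.norm_eq]
  apply Real.sqrt_le_sqrt
  have h1 : ∀ i, ‖Dsm q v i‖ ^ 2 = (sm q i * (v i - ∑ j, sm q j * v j)) ^ 2 := by
    intro i; rw [Dsm_apply, Real.norm_eq_abs, sq_abs]
  have h2 : ∀ i, ‖v i‖ ^ 2 = v i ^ 2 := fun i => by rw [Real.norm_eq_abs, sq_abs]
  simp only [h1, h2]
  exact sum_sq_le (sm q) (fun i => v i) (sm_nonneg q) (sm_le_one q) (sum_sm_le_one q)

lemma norm_Dsm_le (q : EuclideanSpace ℝ (Fin m)) : ‖Dsm q‖ ≤ 1 :=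
  ContinuousLinearMap.opNorm_le_bound _ zero_le_one fun v => by
    rw [one_mul]; exact norm_Dsm_apply_le q v

lemma softmax_lipschitz (q q' : EuclideanSpace ℝ (Fin m)) :
    ‖softmax q - softmax q'‖ ≤ ‖q - q'‖ := by
  have := (convex_univ : Convex ℝ (Set.univ : Set (EuclideanSpace ℝ (Fin m)))).norm_image_sub_le_of_norm_hasFDerivWithin_le
    (f := softmax) (f' := Dsm)
    (fun z _ => (hasFDerivAt_softmax z).hasFDerivWithinAt)
    (fun z _ => norm_Dsm_le z) (Set.mem_univ q') (Set.mem_univ q)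
  simpa using this

end SmAux2


/-- For the belief vectors `p(T;x) = softmax(W_c·h(T;x) + b_c)` of a classifier
built on a λ-stable, κ-input-Lipschitz RNN with zero initial states,
`‖p(T;x) − p(T;x̃)‖ ≤ η·‖x − x̃‖_ℓ∞` with `η = κ·‖W_c‖/(1 − λ)`. -/
theorem stmt_6 {a b m : ℕ}
    (F : EuclideanSpace ℝ (Fin b) → EuclideanSpace ℝ (Fin a) → EuclideanSpace ℝ (Fin b))
    (lam kappa : ℝ) (hlam0 : 0 < lam) (hlam1 : lam < 1) (hkappa : 0 < kappa)
    (hstable : ∀ (h h' : EuclideanSpace ℝ (Fin b)) (u : EuclideanSpace ℝ (Fin a)),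
      ‖F h u - F h' u‖ ≤ lam * ‖h - h'‖)
    (hlip : ∀ (h : EuclideanSpace ℝ (Fin b)) (u u' : EuclideanSpace ℝ (Fin a)),
      ‖F h u - F h u'‖ ≤ kappa * ‖u - u'‖)
    (Wc : EuclideanSpace ℝ (Fin b) →L[ℝ] EuclideanSpace ℝ (Fin m))
    (bc : EuclideanSpace ℝ (Fin m))
    (T : ℕ) (hT : 1 ≤ T)
    (x xt : ℕ → EuclideanSpace ℝ (Fin a))
    (h ht : ℕ → EuclideanSpace ℝ (Fin b))
    (h0 : h 0 = 0) (ht0 : ht 0 = 0)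
    (hrec : ∀ t, h (t + 1) = F (h t) (x (t + 1)))
    (htrec : ∀ t, ht (t + 1) = F (ht t) (xt (t + 1))) :
    ‖softmax (Wc (h T) + bc) - softmax (Wc (ht T) + bc)‖ ≤
      (kappa * ‖Wc‖ / (1 - lam)) *
        (Finset.Icc 1 T).sup' (Finset.nonempty_Icc.mpr hT)
          (fun s => ‖x s - xt s‖) := by
  set M := (Finset.Icc 1 T).sup' (Finset.nonempty_Icc.mpr hT) (fun s => ‖x s - xt s‖) with hM
  have hMle : ∀ s, 1 ≤ s → s ≤ T → ‖x s - xt s‖ ≤ M := by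
    intro s h1 h2
    rw [hM]
    exact Finset.le_sup' (fun s => ‖x s - xt s‖) (Finset.mem_Icc.mpr ⟨h1, h2⟩)
  have hM0 : 0 ≤ M := le_trans (norm_nonneg (x 1 - xt 1)) (hMle 1 le_rfl hT)
  have h1l : (0:ℝ) < 1 - lam := by linarith
  have key : ∀ t, t ≤ T → ‖h t - ht t‖ ≤ kappa * M * ∑ i ∈ Finset.range t, lam ^ i := by
    intro t
    induction t with
    | zero => intro _; simp [h0, ht0]
    | succ t ih =>
      intro hsucc
      have ihh := ih (le_trans (Nat.le_succ t) hsucc)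
      rw [hrec t, htrec t]
      calc ‖F (h t) (x (t+1)) - F (ht t) (xt (t+1))‖
          ≤ ‖F (h t) (x (t+1)) - F (ht t) (x (t+1))‖
            + ‖F (ht t) (x (t+1)) - F (ht t) (xt (t+1))‖ := by
            have := dist_triangle (F (h t) (x (t+1))) (F (ht t) (x (t+1)))
              (F (ht t) (xt (t+1)))
            simpa [dist_eq_norm] using this
        _ ≤ lam * ‖h t - ht t‖ + kappa * ‖x (t+1) - xt (t+1)‖ :=
            add_le_add (hstable _ _ _) (hlip _ _ _)
        _ ≤ lam * (kappa * M * ∑ i ∈ Finset.range t, lam ^ i) + kappa * M := by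
            apply add_le_add
            · exact mul_le_mul_of_nonneg_left ihh hlam0.le
            · exact mul_le_mul_of_nonneg_left
                (hMle (t+1) (Nat.succ_le_succ (Nat.zero_le t)) hsucc) hkappa.le
        _ = kappa * M * ∑ i ∈ Finset.range (t+1), lam ^ i := by
            rw [geom_sum_succ]; ring
  have hgeom : ∑ i ∈ Finset.range T, lam ^ i ≤ 1 / (1 - lam) := by
    rw [geom_sum_eq hlam1.ne]
    have e : (lam ^ T - 1)/(lam - 1) = (1 - lam ^ T)/(1 - lam) := by
      rw [← neg_div_neg_eq]; congr 1 <;> ring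
    rw [e, div_le_div_iff_of_pos_right h1l]
    nlinarith [pow_nonneg hlam0.le T]
  have hfin : ‖h T - ht T‖ ≤ kappa * M * (1 / (1 - lam)) :=
    le_trans (key T le_rfl) (mul_le_mul_of_nonneg_left hgeom (mul_nonneg hkappa.le hM0))
  calc ‖softmax (Wc (h T) + bc) - softmax (Wc (ht T) + bc)‖
      ≤ ‖(Wc (h T) + bc) - (Wc (ht T) + bc)‖ := SmAux2.softmax_lipschitz _ _
    _ = ‖Wc (h T - ht T)‖ := by rw [map_sub]; congr 1; abel
    _ ≤ ‖Wc‖ * ‖h T - ht T‖ := Wc.le_opNorm _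
    _ ≤ ‖Wc‖ * (kappa * M * (1 / (1 - lam))) :=
        mul_le_mul_of_nonneg_left hfin (norm_nonneg _)
    _ = (kappa * ‖Wc‖ / (1 - lam)) * M := by field_simp
end

section
/- For m ≥ 2 and k ∈ {1,…,m}, let S be a nonempty finite subset of V_k and let ε_k = min over p ∈ S and j ≠ k of d(p, V_j). If p̃ ∈ P_m and there exists p ∈ S with ‖p − p̃‖ < ε_k, then p̃ ∈ V_k. -/
/-- The probability simplex `P_m ⊆ ℝ^m`. -/
def probSimplex (m : ℕ) : Set (EuclideanSpace ℝ (Fin m)) :=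
  {p | (∀ i, 0 ≤ p i) ∧ ∑ i, p i = 1}

/-- The Voronoi cell `V_k = {p ∈ P_m | p_k > p_j for all j ≠ k}`. -/
def Vcell {m : ℕ} (k : Fin m) : Set (EuclideanSpace ℝ (Fin m)) :=
  {p | p ∈ probSimplex m ∧ ∀ j, j ≠ k → p j < p k}

/-- A point of the simplex whose `j`-th coordinate is maximal has distance 0 to `V_j`. -/
lemma infDist_zero_of_max {m : ℕ} (q : EuclideanSpace ℝ (Fin m)) (j : Fin m)
    (hq : q ∈ probSimplex m) (hmax : ∀ i, q i ≤ q j) :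
    Metric.infDist q (Vcell j) = 0 := by
  have hcl : q ∈ closure (Vcell j) := by
    rw [Metric.mem_closure_iff]
    intro ε hε
    set e : EuclideanSpace ℝ (Fin m) := EuclideanSpace.single j (1 : ℝ) with he
    set t : ℝ := min (1/2) (ε / (‖q - e‖ + 1)) with ht
    have hnorm_pos : (0:ℝ) < ‖q - e‖ + 1 := by positivity
    have ht_pos : 0 < t := by
      apply lt_min (by norm_num)
      positivity
    have ht_le1 : t ≤ 1 := le_trans (min_le_left _ _) (by norm_num)
    set b : EuclideanSpace ℝ (Fin m) := q + t • (e - q) with hb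
    have hbi : ∀ i, b i = (1 - t) * q i + t * (if i = j then 1 else 0) := by
      intro i
      simp only [hb, he, PiLp.add_apply, PiLp.smul_apply, PiLp.sub_apply,
        smul_eq_mul]
      rw [EuclideanSpace.single_apply]
      ring
    refine ⟨b, ⟨⟨?_, ?_⟩, ?_⟩, ?_⟩
    · intro i
      rw [hbi]
      have := hq.1 i
      have : 0 ≤ (1 - t) * q i := mul_nonneg (by linarith) this
      split_ifs <;> nlinarith [ht_pos.le]
    · simp only [hbi]
      rw [Finset.sum_add_distrib, ← Finset.mul_sum, hq.2]
      rw [← Finset.mul_sum]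
      simp [Finset.sum_ite_eq']
    · intro i hij
      rw [hbi, hbi]
      simp only [if_neg hij, if_pos rfl, if_true, mul_zero, mul_one, add_zero]
      have h1 : (1 - t) * q i ≤ (1 - t) * q j :=
        mul_le_mul_of_nonneg_left (hmax i) (by linarith)
      linarith
    · have : dist q b = t * ‖q - e‖ := by
        rw [dist_eq_norm, hb]
        have : q - (q + t • (e - q)) = t • (q - e) := by
          module
        rw [this, norm_smul, Real.norm_eq_abs, abs_of_pos ht_pos]
      rw [this]
      have htle : t ≤ ε / (‖q - e‖ + 1) := min_le_right _ _
      have h2 : t * ‖q - e‖ ≤ ε / (‖q - e‖ + 1) * ‖q - e‖ :=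
        mul_le_mul_of_nonneg_right htle (norm_nonneg _)
      have h3 : ε / (‖q - e‖ + 1) * ‖q - e‖ < ε := by
        rw [div_mul_eq_mul_div, div_lt_iff₀ hnorm_pos]
        nlinarith [norm_nonneg (q - e)]
      linarith
  exact (Metric.infDist_zero_of_mem_closure hcl)

/-- for a nonempty finite set S ⊆ V_k with robustness radius
ε_k = min_{p ∈ S, j ≠ k} d(p, V_j), any p̃ ∈ P_m within distance < ε_k of some p ∈ S
lies in V_k. -/
theorem stmt_14 {m : ℕ} (hm : 2 ≤ m) (k : Fin m)
    (S : Finset (EuclideanSpace ℝ (Fin m))) (hS : S.Nonempty)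
    (hSV : ∀ p ∈ S, p ∈ Vcell k)
    (pt : EuclideanSpace ℝ (Fin m)) (hpt : pt ∈ probSimplex m)
    (p : EuclideanSpace ℝ (Fin m)) (hpS : p ∈ S)
    (hclose : ‖p - pt‖ <
      sInf {d : ℝ | ∃ p' ∈ S, ∃ j : Fin m, j ≠ k ∧ d = Metric.infDist p' (Vcell j)}) :
    pt ∈ Vcell k := by
  by_contra hcon
  -- there is j ≠ k with pt k ≤ pt j
  have hj : ∃ j, j ≠ k ∧ pt k ≤ pt j := by
    by_contra h
    push_neg at h
    exact hcon ⟨hpt, fun j hj => h j hj⟩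
  obtain ⟨j, hjk, hjge⟩ := hj
  -- pick a maximizing coordinate j' ≠ k
  obtain ⟨j₀, -, hj₀⟩ := Finset.exists_max_image Finset.univ (fun i => pt i)
    ⟨j, Finset.mem_univ j⟩
  have hj' : ∃ j', j' ≠ k ∧ ∀ i, pt i ≤ pt j' := by
    by_cases h : j₀ = k
    · refine ⟨j, hjk, fun i => ?_⟩
      have := hj₀ i (Finset.mem_univ i)
      rw [h] at this
      linarith
    · exact ⟨j₀, h, fun i => hj₀ i (Finset.mem_univ i)⟩
  obtain ⟨j', hj'k, hj'max⟩ := hj'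
  have h0 : Metric.infDist pt (Vcell j') = 0 :=
    infDist_zero_of_max pt j' hpt hj'max
  have hle : Metric.infDist p (Vcell j') ≤ ‖p - pt‖ := by
    have := Metric.infDist_le_infDist_add_dist (x := p) (y := pt) (s := Vcell j')
    rw [h0] at this
    simpa [dist_eq_norm] using this
  have hmem : Metric.infDist p (Vcell j') ∈
      {d : ℝ | ∃ p' ∈ S, ∃ j : Fin m, j ≠ k ∧ d = Metric.infDist p' (Vcell j)} :=
    ⟨p, hpS, j', hj'k, rfl⟩
  have hbdd : BddBelow {d : ℝ | ∃ p' ∈ S, ∃ j : Fin m, j ≠ k ∧ d = Metric.infDist p' (Vcell j)} := by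
    refine ⟨0, fun d hd => ?_⟩
    obtain ⟨p', -, j'', -, rfl⟩ := hd
    exact Metric.infDist_nonneg
  have := csInf_le hbdd hmem
  linarith
end

section
/- Let F : ℝ^b × ℝ^a → ℝ^b be λ-stable with λ ∈ (0,1) and κ-Lipschitz in its input, let W_c be an m × b real matrix with m ≥ 2 and b_c ∈ ℝ^m, and for an input sequence x of length T define the belief vector p(T;x) = softmax(W_c·h(T;x) + b_c), where h(t;x) are the hidden states with zero initial state. Set η = κ·‖W_c‖/(1 − λ). Let S be a nonempty finite set of nominal input sequences of length T such that p(T;x) ∈ V_k for every x ∈ S, and let ε_k = min over x ∈ S and j ≠ k of d(p(T;x), V_j). If a perturbed input sequence x̃ of length T satisfies ‖x − x̃‖_ℓ∞ < ε_k/η for some x ∈ S, then the classification of x̃ is robust for the k'th class, i.e., p(T;x̃) ∈ V_k. -/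
/-- Hidden-state sequence of the RNN `F` driven by input sequence `x`, with zero
initial state: `h(0;x) = 0` and `h(t;x) = F(h(t−1;x), x(t))`. -/
noncomputable def hstate {a b : ℕ}
    (F : EuclideanSpace ℝ (Fin b) → EuclideanSpace ℝ (Fin a) → EuclideanSpace ℝ (Fin b))
    (x : ℕ → EuclideanSpace ℝ (Fin a)) : ℕ → EuclideanSpace ℝ (Fin b)
  | 0 => 0
  | t + 1 => F (hstate F x t) (x (t + 1))

/- ## Auxiliary material -/

open scoped BigOperators

noncomputable def smFun (m : ℕ) (q : Fin m → ℝ) : Fin m → ℝ :=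
  fun i => Real.exp (q i) / ∑ j, Real.exp (q j)

lemma smFun_nonneg {m : ℕ} [NeZero m] (q : Fin m → ℝ) (i : Fin m) : 0 ≤ smFun m q i := by
  have hS : 0 < ∑ j, Real.exp (q j) :=
    Finset.sum_pos (fun j _ => Real.exp_pos _) Finset.univ_nonempty
  exact div_nonneg (Real.exp_pos _).le hS.le

lemma smFun_sum {m : ℕ} [NeZero m] (q : Fin m → ℝ) : ∑ i, smFun m q i = 1 := by
  have hS : 0 < ∑ j, Real.exp (q j) :=
    Finset.sum_pos (fun j _ => Real.exp_pos _) Finset.univ_nonempty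
  simp only [smFun]
  rw [← Finset.sum_div, div_self hS.ne']

noncomputable def smDeriv {m : ℕ} (p : Fin m → ℝ) : (Fin m → ℝ) →L[ℝ] (Fin m → ℝ) :=
  ContinuousLinearMap.pi fun i =>
    (p i) • ((ContinuousLinearMap.proj i : (Fin m → ℝ) →L[ℝ] ℝ) -
      ∑ j, (p j) • (ContinuousLinearMap.proj j : (Fin m → ℝ) →L[ℝ] ℝ))

lemma smFun_hasFDerivAt {m : ℕ} [NeZero m] (q : Fin m → ℝ) :
    HasFDerivAt (smFun m) (smDeriv (smFun m q)) q := by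
  have hSpos : 0 < ∑ j, Real.exp (q j) :=
    Finset.sum_pos (fun j _ => Real.exp_pos _) Finset.univ_nonempty
  rw [hasFDerivAt_pi']
  intro i
  have hc : HasFDerivAt (fun q : Fin m → ℝ => Real.exp (q i))
      (Real.exp (q i) • (ContinuousLinearMap.proj i : (Fin m → ℝ) →L[ℝ] ℝ)) q :=
    (Real.hasDerivAt_exp (q i)).comp_hasFDerivAt (f := fun q : Fin m → ℝ => q i) q (hasFDerivAt_apply i q)
  have hd : HasFDerivAt (fun q : Fin m → ℝ => ∑ j, Real.exp (q j))
      (∑ j, Real.exp (q j) • (ContinuousLinearMap.proj j : (Fin m → ℝ) →L[ℝ] ℝ)) q :=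
    HasFDerivAt.fun_sum (fun j _ =>
      (Real.hasDerivAt_exp (q j)).comp_hasFDerivAt (f := fun q : Fin m → ℝ => q j) q (hasFDerivAt_apply j q))
  have hdinv : HasFDerivAt (fun q : Fin m → ℝ => (∑ j, Real.exp (q j))⁻¹)
      ((-((∑ j, Real.exp (q j)) ^ 2)⁻¹) •
        (∑ j, Real.exp (q j) • (ContinuousLinearMap.proj j : (Fin m → ℝ) →L[ℝ] ℝ))) q :=
    (hasDerivAt_inv hSpos.ne').comp_hasFDerivAt q hd
  have h := hc.fun_mul hdinv
  have heq : (fun x : Fin m → ℝ => smFun m x i) =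
      fun x => Real.exp (x i) * (∑ j, Real.exp (x j))⁻¹ := by
    funext x; simp [smFun, div_eq_mul_inv]
  rw [heq]
  refine h.congr_fderiv ?_
  symm; apply ContinuousLinearMap.ext; intro v
  have hS := hSpos.ne'
  simp only [smDeriv, smFun, ContinuousLinearMap.coe_comp', Function.comp_apply,
    ContinuousLinearMap.pi_apply, ContinuousLinearMap.proj_apply,
    ContinuousLinearMap.add_apply, ContinuousLinearMap.smul_apply,
    ContinuousLinearMap.sub_apply, ContinuousLinearMap.coe_sum', Finset.sum_apply,
    smul_eq_mul, ContinuousLinearMap.neg_apply]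
  have hL : ∑ j, Real.exp (q j) / (∑ j, Real.exp (q j)) * v j
      = (∑ j, Real.exp (q j) * v j) / (∑ j, Real.exp (q j)) := by
    rw [Finset.sum_div]; exact Finset.sum_congr rfl fun j _ => by ring
  rw [hL]
  field_simp
  ring

noncomputable def eE (m : ℕ) :
    EuclideanSpace ℝ (Fin m) ≃L[ℝ] (Fin m → ℝ) :=
  PiLp.continuousLinearEquiv 2 ℝ (fun _ : Fin m => ℝ)

noncomputable def smDerivE {m : ℕ} (p : Fin m → ℝ) :
    EuclideanSpace ℝ (Fin m) →L[ℝ] EuclideanSpace ℝ (Fin m) :=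
  ((eE m).symm : (Fin m → ℝ) →L[ℝ] EuclideanSpace ℝ (Fin m)).comp
    ((smDeriv p).comp ((eE m) : EuclideanSpace ℝ (Fin m) →L[ℝ] (Fin m → ℝ)))

lemma smDerivE_apply {m : ℕ} (p : Fin m → ℝ) (v : EuclideanSpace ℝ (Fin m)) (i : Fin m) :
    smDerivE p v i = p i * (v i - ∑ j, p j * v j) := by
  simp [smDerivE, smDeriv, eE, ContinuousLinearMap.proj_apply, mul_comm]

lemma key_sum_ineq {m : ℕ} (p v : Fin m → ℝ) (h0 : ∀ i, 0 ≤ p i)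
    (h1 : ∑ i, p i = 1) :
    ∑ i, (p i * (v i - ∑ j, p j * v j)) ^ 2 ≤ ∑ i, (v i) ^ 2 := by
  set s := ∑ j, p j * v j with hs
  have hple : ∀ i, p i ≤ 1 := by
    intro i
    calc p i ≤ ∑ j, p j := Finset.single_le_sum (fun j _ => h0 j) (Finset.mem_univ i)
    _ = 1 := h1
  have step1 : ∑ i, (p i * (v i - s)) ^ 2 ≤ ∑ i, p i * (v i - s) ^ 2 := by
    apply Finset.sum_le_sum
    intro i _
    have h : (p i * (v i - s)) ^ 2 = p i ^ 2 * (v i - s) ^ 2 := by ring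
    rw [h]
    have hp2 : p i ^ 2 ≤ p i := by nlinarith [h0 i, hple i]
    exact mul_le_mul_of_nonneg_right hp2 (sq_nonneg _)
  have step2 : ∑ i, p i * (v i - s) ^ 2 = (∑ i, p i * v i ^ 2) - s ^ 2 := by
    have h : ∀ i, p i * (v i - s) ^ 2 = p i * v i ^ 2 - 2 * s * (p i * v i) + s ^ 2 * p i := by
      intro i; ring
    simp only [h]
    rw [Finset.sum_add_distrib, Finset.sum_sub_distrib, ← Finset.mul_sum, ← Finset.mul_sum,
      ← hs, h1]
    ring
  have step3 : (∑ i, p i * v i ^ 2) - s ^ 2 ≤ ∑ i, p i * v i ^ 2 := by nlinarith [sq_nonneg s]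
  have step4 : ∑ i, p i * v i ^ 2 ≤ ∑ i, (v i) ^ 2 := by
    apply Finset.sum_le_sum
    intro i _
    nlinarith [sq_nonneg (v i), h0 i, hple i]
  linarith

lemma norm_smDerivE_le {m : ℕ} (p : Fin m → ℝ) (h0 : ∀ i, 0 ≤ p i)
    (h1 : ∑ i, p i = 1) : ‖smDerivE p‖ ≤ 1 := by
  apply ContinuousLinearMap.opNorm_le_bound _ zero_le_one
  intro v
  rw [one_mul, EuclideanSpace.norm_eq, EuclideanSpace.norm_eq]
  apply Real.sqrt_le_sqrt
  calc ∑ i, ‖smDerivE p v i‖ ^ 2 = ∑ i, (p i * (v i - ∑ j, p j * v j)) ^ 2 := by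
        apply Finset.sum_congr rfl; intro i _; rw [smDerivE_apply, Real.norm_eq_abs, sq_abs]
  _ ≤ ∑ i, (v i) ^ 2 := key_sum_ineq p v h0 h1
  _ = ∑ i, ‖v i‖ ^ 2 := by
        apply Finset.sum_congr rfl; intro i _; rw [Real.norm_eq_abs, sq_abs]

lemma softmax_hasFDerivAt {m : ℕ} [NeZero m] (z : EuclideanSpace ℝ (Fin m)) :
    HasFDerivAt softmax (smDerivE (smFun m ((eE m) z))) z := by
  have h1 := smFun_hasFDerivAt ((eE m) z)
  have h2 : HasFDerivAt (fun y : EuclideanSpace ℝ (Fin m) => smFun m ((eE m) y))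
      ((smDeriv (smFun m ((eE m) z))).comp
        ((eE m : EuclideanSpace ℝ (Fin m) →L[ℝ] (Fin m → ℝ)))) z :=
    h1.comp z ((eE m : EuclideanSpace ℝ (Fin m) →L[ℝ] (Fin m → ℝ)).hasFDerivAt)
  exact (((eE m).symm : (Fin m → ℝ) →L[ℝ] EuclideanSpace ℝ (Fin m)).hasFDerivAt).comp z h2

lemma softmax_lipschitz {m : ℕ} [NeZero m] (q q' : EuclideanSpace ℝ (Fin m)) :
    ‖softmax q - softmax q'‖ ≤ ‖q - q'‖ := by
  have h := Convex.norm_image_sub_le_of_norm_hasFDerivWithin_le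
    (f := softmax) (f' := fun z => smDerivE (smFun m ((eE m) z))) (s := Set.univ) (C := 1)
    (fun z _ => (softmax_hasFDerivAt z).hasFDerivWithinAt)
    (fun z _ => norm_smDerivE_le _ (smFun_nonneg _) (smFun_sum _))
    convex_univ (Set.mem_univ q') (Set.mem_univ q)
  simpa using h

lemma softmax_apply {m : ℕ} (q : EuclideanSpace ℝ (Fin m)) (i : Fin m) :
    softmax q i = Real.exp (q i) / ∑ j, Real.exp (q j) := rfl

lemma softmax_mem_simplex {m : ℕ} [NeZero m] (q : EuclideanSpace ℝ (Fin m)) :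
    softmax q ∈ probSimplex m := by
  constructor
  · intro i; exact smFun_nonneg ((eE m) q) i
  · exact smFun_sum ((eE m) q)

lemma hstate_dev {a b : ℕ}
    (F : EuclideanSpace ℝ (Fin b) → EuclideanSpace ℝ (Fin a) → EuclideanSpace ℝ (Fin b))
    (lam kappa : ℝ) (hlam0 : 0 < lam) (hlam1 : lam < 1) (hkappa : 0 < kappa)
    (hstable : ∀ (h h' : EuclideanSpace ℝ (Fin b)) (u : EuclideanSpace ℝ (Fin a)),
      ‖F h u - F h' u‖ ≤ lam * ‖h - h'‖)
    (hlip : ∀ (h : EuclideanSpace ℝ (Fin b)) (u u' : EuclideanSpace ℝ (Fin a)),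
      ‖F h u - F h u'‖ ≤ kappa * ‖u - u'‖)
    (x xt : ℕ → EuclideanSpace ℝ (Fin a)) (T : ℕ) (D : ℝ) (hD0 : 0 ≤ D)
    (hD : ∀ s, 1 ≤ s → s ≤ T → ‖x s - xt s‖ ≤ D) :
    ∀ t, t ≤ T → ‖hstate F x t - hstate F xt t‖ ≤ kappa / (1 - lam) * D := by
  have hl : 0 < 1 - lam := by linarith
  intro t
  induction t with
  | zero =>
      intro _
      simp only [hstate, sub_zero, norm_zero]
      positivity
  | succ t ih =>
      intro hle
      have ih' := ih (Nat.le_of_succ_le hle)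
      have h1 : ‖hstate F x (t+1) - hstate F xt (t+1)‖ ≤
          ‖F (hstate F x t) (x (t+1)) - F (hstate F xt t) (x (t+1))‖ +
          ‖F (hstate F xt t) (x (t+1)) - F (hstate F xt t) (xt (t+1))‖ := by
        simpa only [hstate] using
          norm_sub_le_norm_sub_add_norm_sub (F (hstate F x t) (x (t+1)))
            (F (hstate F xt t) (x (t+1))) (F (hstate F xt t) (xt (t+1)))
      have h2 := hstable (hstate F x t) (hstate F xt t) (x (t+1))
      have h3 := hlip (hstate F xt t) (x (t+1)) (xt (t+1))
      have h4 : ‖x (t+1) - xt (t+1)‖ ≤ D := hD (t+1) (Nat.le_add_left 1 t) hle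
      have h5 : lam * ‖hstate F x t - hstate F xt t‖ ≤ lam * (kappa / (1 - lam) * D) :=
        mul_le_mul_of_nonneg_left ih' hlam0.le
      have h6 : kappa * ‖x (t+1) - xt (t+1)‖ ≤ kappa * D :=
        mul_le_mul_of_nonneg_left h4 hkappa.le
      have heq : lam * (kappa / (1 - lam) * D) + kappa * D = kappa / (1 - lam) * D := by
        field_simp
        ring
      linarith

lemma infDist_vcell_eq_zero {m : ℕ} (p : EuclideanSpace ℝ (Fin m))
    (hp : p ∈ probSimplex m) (j : Fin m) (hmax : ∀ l, p l ≤ p j) :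
    Metric.infDist p (Vcell j) = 0 := by
  have hcl : p ∈ closure (Vcell j) := by
    rw [Metric.mem_closure_iff]
    intro ε hε
    set ej : EuclideanSpace ℝ (Fin m) := EuclideanSpace.single j (1 : ℝ) with hej
    set C : ℝ := dist p ej with hC
    have hC0 : 0 ≤ C := dist_nonneg
    set θ : ℝ := min 1 (ε / (2 * (C + 1))) with hθ
    have hθ0 : 0 < θ := lt_min one_pos (div_pos hε (by linarith))
    have hθ1 : θ ≤ 1 := min_le_left _ _
    have hθ2 : θ ≤ ε / (2 * (C + 1)) := min_le_right _ _
    refine ⟨(1 - θ) • p + θ • ej, ?_, ?_⟩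
    · obtain ⟨hp0, hp1⟩ := hp
      refine ⟨⟨?_, ?_⟩, ?_⟩
      · intro i
        simp only [PiLp.add_apply, PiLp.smul_apply, smul_eq_mul]
        have h1 : 0 ≤ ej i := by
          rw [hej, EuclideanSpace.single_apply]
          split <;> norm_num
        have := hp0 i
        nlinarith
      · have hsum : ∑ i, ej i = 1 := by
          simp [hej, EuclideanSpace.single_apply]
        simp only [PiLp.add_apply, PiLp.smul_apply, smul_eq_mul]
        rw [Finset.sum_add_distrib, ← Finset.mul_sum, ← Finset.mul_sum, hp1, hsum]
        ring
      · intro l hl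
        simp only [PiLp.add_apply, PiLp.smul_apply, smul_eq_mul]
        have h1 : ej l = 0 := by
          rw [hej, EuclideanSpace.single_apply, if_neg hl]
        have h2 : ej j = 1 := by
          rw [hej, EuclideanSpace.single_apply, if_pos rfl]
        rw [h1, h2]
        have := hmax l
        nlinarith
    · have hdist : dist p ((1 - θ) • p + θ • ej) = θ * C := by
        rw [dist_eq_norm]
        have h : p - ((1 - θ) • p + θ • ej) = θ • (p - ej) := by
          module
        rw [h, norm_smul, Real.norm_eq_abs, abs_of_pos hθ0, hC, dist_eq_norm]
      rw [hdist]
      have : θ * C ≤ ε / (2 * (C + 1)) * C := mul_le_mul_of_nonneg_right hθ2 hC0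
      have hlt : ε / (2 * (C + 1)) * C < ε := by
        rw [div_mul_eq_mul_div, div_lt_iff₀ (by linarith)]
        nlinarith
      linarith
  rw [← Metric.infDist_closure]
  exact Metric.infDist_zero_of_mem hcl

/-- robustness of classification (Theorem 2 of the paper). For the classifier
`p(T;x) = softmax(W_c·h(T;x) + b_c)` built on a λ-stable, κ-input-Lipschitz RNN with zero
initial states, η = κ·‖W_c‖/(1−λ), a nonempty finite set `S` of nominal sequences whose
beliefs lie in `V_k`, and robustness radius `ε_k = min_{x ∈ S, j ≠ k} d(p(T;x), V_j)`: any
perturbed sequence `x̃` with `‖x − x̃‖_ℓ∞ < ε_k/η` for some `x ∈ S` is classified in `V_k`. -/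
theorem stmt_15 {a b m : ℕ} (hm : 2 ≤ m)
    (F : EuclideanSpace ℝ (Fin b) → EuclideanSpace ℝ (Fin a) → EuclideanSpace ℝ (Fin b))
    (lam kappa : ℝ) (hlam0 : 0 < lam) (hlam1 : lam < 1) (hkappa : 0 < kappa)
    (hstable : ∀ (h h' : EuclideanSpace ℝ (Fin b)) (u : EuclideanSpace ℝ (Fin a)),
      ‖F h u - F h' u‖ ≤ lam * ‖h - h'‖)
    (hlip : ∀ (h : EuclideanSpace ℝ (Fin b)) (u u' : EuclideanSpace ℝ (Fin a)),
      ‖F h u - F h u'‖ ≤ kappa * ‖u - u'‖)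
    (Wc : EuclideanSpace ℝ (Fin b) →L[ℝ] EuclideanSpace ℝ (Fin m))
    (bc : EuclideanSpace ℝ (Fin m))
    (T : ℕ) (hT : 1 ≤ T) (k : Fin m)
    (S : Finset (ℕ → EuclideanSpace ℝ (Fin a))) (hS : S.Nonempty)
    (hSV : ∀ x ∈ S, softmax (Wc (hstate F x T) + bc) ∈ Vcell k)
    (xt : ℕ → EuclideanSpace ℝ (Fin a))
    (x : ℕ → EuclideanSpace ℝ (Fin a)) (hxS : x ∈ S)
    (hdev : (Finset.Icc 1 T).sup' (Finset.nonempty_Icc.mpr hT)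
        (fun s => ‖x s - xt s‖) <
      (sInf {d : ℝ | ∃ x' ∈ S, ∃ j : Fin m, j ≠ k ∧
          d = Metric.infDist (softmax (Wc (hstate F x' T) + bc)) (Vcell j)}) /
        (kappa * ‖Wc‖ / (1 - lam))) :
    softmax (Wc (hstate F xt T) + bc) ∈ Vcell k := by
  haveI : NeZero m := ⟨by omega⟩
  by_cases hW : Wc = 0
  · have := hSV x hxS
    simpa [hW] using this
  -- main case
  have hWn : 0 < ‖Wc‖ := norm_pos_iff.mpr hW
  have hl : 0 < 1 - lam := by linarith
  set D : ℝ := (Finset.Icc 1 T).sup' (Finset.nonempty_Icc.mpr hT)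
      (fun s => ‖x s - xt s‖) with hD
  set ε : ℝ := sInf {d : ℝ | ∃ x' ∈ S, ∃ j : Fin m, j ≠ k ∧
      d = Metric.infDist (softmax (Wc (hstate F x' T) + bc)) (Vcell j)} with hε
  set η : ℝ := kappa * ‖Wc‖ / (1 - lam) with hη
  have hη0 : 0 < η := by positivity
  have hDη : D * η < ε := (lt_div_iff₀ hη0).mp hdev
  have hD0 : 0 ≤ D := by
    have h1 : (1 : ℕ) ∈ Finset.Icc 1 T := Finset.mem_Icc.mpr ⟨le_rfl, hT⟩
    exact le_trans (norm_nonneg _) (Finset.le_sup' (fun s => ‖x s - xt s‖) h1)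
  -- state deviation bound
  have hdevT : ‖hstate F x T - hstate F xt T‖ ≤ kappa / (1 - lam) * D := by
    refine hstate_dev F lam kappa hlam0 hlam1 hkappa hstable hlip x xt T D hD0 ?_ T le_rfl
    intro s hs1 hsT
    exact Finset.le_sup' (fun s => ‖x s - xt s‖) (Finset.mem_Icc.mpr ⟨hs1, hsT⟩)
  -- belief deviation bound
  set p : EuclideanSpace ℝ (Fin m) := softmax (Wc (hstate F x T) + bc) with hpdef
  set pt : EuclideanSpace ℝ (Fin m) := softmax (Wc (hstate F xt T) + bc) with hptdef
  have hbelief : ‖p - pt‖ < ε := by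
    have h1 : ‖p - pt‖ ≤ ‖(Wc (hstate F x T) + bc) - (Wc (hstate F xt T) + bc)‖ :=
      softmax_lipschitz _ _
    have h2 : (Wc (hstate F x T) + bc) - (Wc (hstate F xt T) + bc)
        = Wc (hstate F x T - hstate F xt T) := by
      rw [map_sub]; abel
    have h3 : ‖Wc (hstate F x T - hstate F xt T)‖ ≤ ‖Wc‖ * (kappa / (1 - lam) * D) :=
      le_trans (Wc.le_opNorm _) (mul_le_mul_of_nonneg_left hdevT (norm_nonneg _))
    have h4 : ‖Wc‖ * (kappa / (1 - lam) * D) = D * η := by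
      rw [hη]; field_simp
    rw [h2] at h1
    linarith
  -- conclude
  by_contra hnot
  have hptS : pt ∈ probSimplex m := softmax_mem_simplex _
  have hex : ∃ j0 : Fin m, j0 ≠ k ∧ pt k ≤ pt j0 := by
    by_contra hcon
    push_neg at hcon
    exact hnot ⟨hptS, fun j hj => hcon j hj⟩
  obtain ⟨j0, hj0k, hj0⟩ := hex
  have hne : (Finset.univ.erase k).Nonempty := ⟨j0, Finset.mem_erase.mpr ⟨hj0k, Finset.mem_univ _⟩⟩
  obtain ⟨j1, hj1mem, hj1max⟩ := Finset.exists_max_image (Finset.univ.erase k) (fun i => pt i) hne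
  have hj1k : j1 ≠ k := (Finset.mem_erase.mp hj1mem).1
  have hj1glob : ∀ l, pt l ≤ pt j1 := by
    intro l
    by_cases hlk : l = k
    · subst hlk
      exact le_trans hj0 (hj1max j0 (Finset.mem_erase.mpr ⟨hj0k, Finset.mem_univ _⟩))
    · exact hj1max l (Finset.mem_erase.mpr ⟨hlk, Finset.mem_univ _⟩)
  have hzero : Metric.infDist pt (Vcell j1) = 0 := infDist_vcell_eq_zero pt hptS j1 hj1glob
  have htri : Metric.infDist p (Vcell j1) ≤ Metric.infDist pt (Vcell j1) + dist p pt :=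
    Metric.infDist_le_infDist_add_dist
  have hεle : ε ≤ Metric.infDist p (Vcell j1) := by
    apply csInf_le
    · refine ⟨0, fun d hd => ?_⟩
      obtain ⟨x', _, j, _, rfl⟩ := hd
      exact Metric.infDist_nonneg
    · exact ⟨x, hxS, j1, hj1k, rfl⟩
  rw [hzero, zero_add, dist_eq_norm] at htri
  linarith
end
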